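/- arXiv:2202.07213 — 5 statements merged into one kernel-verified Lean document; each statement's English description precedes it below -/
import Mathlib

section
/- Let S, H, K be complex Hilbert spaces, A ∈ B(S, K) and B ∈ B(H, K). There exists a contraction Z ∈ B(S, H) (i.e., ‖Z‖ ≤ 1) satisfying A = B Z if and only if A A* ≤ B B* (as self-adjoint operators on K). -/
open ContinuousLinearMap RCLike
open scoped NNReal

section Aux

variable {X Y K : Type*}
    [NormedAddCommGroup X] [InnerProductSpace ℂ X] [CompleteSpace X]
    [NormedAddCommGroup Y] [InnerProductSpace ℂ Y] [CompleteSpace Y]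
    [NormedAddCommGroup K] [InnerProductSpace ℂ K] [CompleteSpace K]

lemma douglas_reApplyInnerSelf_sub (C : X →L[ℂ] K) (D : Y →L[ℂ] K) (k : K) :
    (D ∘L adjoint D - C ∘L adjoint C).reApplyInnerSelf k
      = ‖adjoint D k‖ ^ 2 - ‖adjoint C k‖ ^ 2 := by
  simp only [reApplyInnerSelf, sub_apply, inner_sub_left, map_sub, comp_apply]
  rw [← adjoint_inner_right D (adjoint D k) k, ← adjoint_inner_right C (adjoint C k) k,
    inner_self_eq_norm_sq, inner_self_eq_norm_sq]

lemma douglas_selfAdjoint (C : X →L[ℂ] K) : IsSelfAdjoint (C ∘L adjoint C) :=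
  isSelfAdjoint_iff'.2 (by rw [adjoint_comp, adjoint_adjoint])

end Aux

open ContinuousLinearMap in
theorem douglas_factorization_contraction {S H K : Type*}
    [NormedAddCommGroup S] [InnerProductSpace ℂ S] [CompleteSpace S]
    [NormedAddCommGroup H] [InnerProductSpace ℂ H] [CompleteSpace H]
    [NormedAddCommGroup K] [InnerProductSpace ℂ K] [CompleteSpace K]
    (A : S →L[ℂ] K) (B : H →L[ℂ] K) :
    (∃ Z : S →L[ℂ] H, ‖Z‖ ≤ 1 ∧ A = B ∘L Z) ↔
      (B ∘L adjoint B - A ∘L adjoint A).IsPositive := by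
  constructor
  · rintro ⟨Z, hZ, rfl⟩
    refine isPositive_def'.2 ⟨(douglas_selfAdjoint B).sub (douglas_selfAdjoint (B ∘L Z)), fun k => ?_⟩
    rw [douglas_reApplyInnerSelf_sub]
    have h1 : ‖adjoint (B ∘L Z) k‖ ≤ ‖adjoint B k‖ := by
      rw [adjoint_comp, comp_apply]
      calc ‖adjoint Z (adjoint B k)‖ ≤ ‖adjoint Z‖ * ‖adjoint B k‖ := le_opNorm _ _
        _ ≤ 1 * ‖adjoint B k‖ := by
            gcongr
            rw [LinearIsometryEquiv.norm_map adjoint Z]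
            exact hZ
        _ = ‖adjoint B k‖ := one_mul _
    nlinarith [norm_nonneg (adjoint (B ∘L Z) k), norm_nonneg (adjoint B k)]
  · intro hpos
    have key : ∀ k : K, ‖adjoint A k‖ ≤ ‖adjoint B k‖ := by
      intro k
      have h := hpos.2 k
      rw [douglas_reApplyInnerSelf_sub] at h
      nlinarith [norm_nonneg (adjoint A k), norm_nonneg (adjoint B k)]
    set p : K →L[ℂ] H := adjoint B with hp
    set q : K →L[ℂ] S := adjoint A with hq
    have hker : LinearMap.ker (p : K →ₗ[ℂ] H) ≤ LinearMap.ker (q : K →ₗ[ℂ] S) := by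
      intro k hk
      simp only [LinearMap.mem_ker, ContinuousLinearMap.coe_coe] at hk ⊢
      have := key k
      rw [hk, norm_zero] at this
      exact norm_le_zero_iff.1 this
    set pl : K →ₗ[ℂ] H := (p : K →ₗ[ℂ] H)
    set R : Submodule ℂ H := LinearMap.range pl with hR
    -- T₀ : linear map on range p, sending p k to q k
    set T₀ : R →ₗ[ℂ] S :=
      ((LinearMap.ker pl).liftQ (q : K →ₗ[ℂ] S) hker).comp
        pl.quotKerEquivRange.symm.toLinearMap with hT₀
    have hT₀_apply : ∀ (k : K) (h : pl k ∈ R), T₀ ⟨pl k, h⟩ = q k := by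
      intro k h
      have : pl.quotKerEquivRange.symm ⟨pl k, h⟩ = (LinearMap.ker pl).mkQ k :=
        pl.quotKerEquivRange_symm_apply_image k h
      simp [hT₀, this]
    have hT₀_bound : ∀ x : R, ‖T₀ x‖ ≤ 1 * ‖x‖ := by
      rintro ⟨x, k, rfl⟩
      rw [hT₀_apply k ⟨k, rfl⟩, one_mul]
      exact key k
    set T₁ : R →L[ℂ] S := T₀.mkContinuous 1 hT₀_bound with hT₁
    set M : Submodule ℂ H := R.topologicalClosure with hM
    set e : R →L[ℂ] M :=
      ContinuousLinearMap.codRestrict R.subtypeL M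
        (fun x => R.le_topologicalClosure x.2) with he
    have h_e1 : ∀ x : R, ‖x‖ ≤ ((1 : NNReal) : ℝ) * ‖e x‖ := fun x => by
      simp [he]
    have h_dense : DenseRange e := by
      refine Topology.IsInducing.subtypeVal.dense_iff.2 fun x => ?_
      convert show (x : H) ∈ closure (R : Set H) from x.prop
      rw [← Set.range_comp]
      ext y
      constructor
      · rintro ⟨y, rfl⟩; exact y.prop
      · rintro hy; exact ⟨⟨y, hy⟩, rfl⟩
    set Text : M →L[ℂ] S :=
      T₁.extend e with hText
    have hText_norm : ‖Text‖ ≤ 1 := by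
      have := T₁.opNorm_extend_le h_dense h_e1
      have h2 : ‖T₁‖ ≤ 1 := T₀.mkContinuous_norm_le zero_le_one hT₀_bound
      calc ‖Text‖ ≤ ((1 : ℝ≥0) : ℝ) * ‖T₁‖ := this
        _ ≤ 1 := by simpa using h2
    set Zd : H →L[ℂ] S := Text ∘L (M.orthogonalProjectionOnto) with hZd
    refine ⟨adjoint Zd, ?_, ?_⟩
    · rw [LinearIsometryEquiv.norm_map adjoint Zd]
      calc ‖Zd‖ ≤ ‖Text‖ * ‖(M.orthogonalProjectionOnto : H →L[ℂ] M)‖ := opNorm_comp_le _ _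
        _ ≤ 1 * 1 := mul_le_mul hText_norm (Submodule.orthogonalProjectionOnto_norm_le M)
            (norm_nonneg (M.orthogonalProjectionOnto : H →L[ℂ] M)) zero_le_one
        _ = 1 := one_mul 1
    · apply_fun ContinuousLinearMap.adjoint using LinearIsometryEquiv.injective _
      rw [adjoint_comp, adjoint_adjoint]
      ext k
      show q k = Zd (p k)
      have hm : p k ∈ M := R.le_topologicalClosure ⟨k, rfl⟩
      have hproj : M.orthogonalProjectionOnto (p k) = ⟨p k, hm⟩ :=
        Submodule.orthogonalProjectionOnto_mem_subspace_eq_self (⟨p k, hm⟩ : M)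
      rw [hZd, comp_apply, hproj]
      have : (⟨p k, hm⟩ : M) = e ⟨p k, ⟨k, rfl⟩⟩ := rfl
      rw [this, hText, ContinuousLinearMap.extend_eq _ h_dense (isUniformEmbedding_of_bound _ h_e1).isUniformInducing]
      exact (hT₀_apply k ⟨k, rfl⟩).symm
end

section
/- Let T1 ∈ B(H1, H1') and T2 ∈ B(H2, H2') be contractions on complex Hilbert spaces, and X ∈ B(H1, H2'). Then the block operator Y = [[T1, 0], [X, T2]] : H1 ⊕ H2 → H1' ⊕ H2' is a contraction if and only if X = D_{T2*} C D_{T1} for some contraction C : H1 → H2', where D_{T1} = (I − T1* T1)^{1/2} and D_{T2*} = (I − T2 T2*)^{1/2}. -/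
open ContinuousLinearMap

/-- The lower-triangular block operator `[[f, 0], [g, h]]` on the Hilbert (ℓ²) direct sum. -/
noncomputable def blockLowerTriangular {E1 E2 F1 F2 : Type*}
    [NormedAddCommGroup E1] [NormedSpace ℂ E1] [NormedAddCommGroup E2] [NormedSpace ℂ E2]
    [NormedAddCommGroup F1] [NormedSpace ℂ F1] [NormedAddCommGroup F2] [NormedSpace ℂ F2]
    (f : E1 →L[ℂ] F1) (g : E1 →L[ℂ] F2) (h : E2 →L[ℂ] F2) :
    WithLp 2 (E1 × E2) →L[ℂ] WithLp 2 (F1 × F2) :=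
  ((WithLp.prodContinuousLinearEquiv 2 ℂ F1 F2).symm : (F1 × F2) →L[ℂ] WithLp 2 (F1 × F2)) ∘L
    ((f ∘L fst ℂ E1 E2).prod (g ∘L fst ℂ E1 E2 + h ∘L snd ℂ E1 E2)) ∘L
      ((WithLp.prodContinuousLinearEquiv 2 ℂ E1 E2) : WithLp 2 (E1 × E2) →L[ℂ] E1 × E2)

/-! ### Auxiliary lemmas -/

section Defect

variable {H H' : Type*} [NormedAddCommGroup H] [InnerProductSpace ℂ H] [CompleteSpace H]
    [NormedAddCommGroup H'] [InnerProductSpace ℂ H'] [CompleteSpace H']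

theorem aux_defect_nonneg (T : H →L[ℂ] H') (hT : ‖T‖ ≤ 1) : 0 ≤ 1 - adjoint T ∘L T := by
  rw [ContinuousLinearMap.nonneg_iff_isPositive]
  constructor
  · have : IsSelfAdjoint (adjoint T ∘L T) := by
      rw [isSelfAdjoint_iff, star_eq_adjoint, adjoint_comp, adjoint_adjoint]
    exact ((IsSelfAdjoint.one _).sub this).isSymmetric
  · intro x
    have h1 : ‖T x‖ ≤ ‖x‖ := by
      calc ‖T x‖ ≤ ‖T‖ * ‖x‖ := T.le_opNorm x
        _ ≤ 1 * ‖x‖ := by nlinarith [norm_nonneg x]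
        _ = ‖x‖ := one_mul _
    simp only [ContinuousLinearMap.reApplyInnerSelf_apply, ContinuousLinearMap.sub_apply,
      ContinuousLinearMap.one_apply, inner_sub_left, map_sub]
    have h2 : RCLike.re (inner (𝕜 := ℂ) ((adjoint T ∘L T) x) x) = ‖T x‖ ^ 2 := by
      rw [ContinuousLinearMap.comp_apply, adjoint_inner_left, inner_self_eq_norm_sq]
    rw [inner_self_eq_norm_sq]
    rw [ContinuousLinearMap.comp_apply] at h2 ⊢
    rw [h2]
    nlinarith [norm_nonneg (T x), norm_nonneg x]

theorem aux_norm_defect_sq (T : H →L[ℂ] H') (hT : ‖T‖ ≤ 1) (h : H) :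
    ‖CFC.sqrt (1 - adjoint T ∘L T) h‖ ^ 2 = ‖h‖ ^ 2 - ‖T h‖ ^ 2 := by
  set a := 1 - adjoint T ∘L T with ha
  have hpos : 0 ≤ a := aux_defect_nonneg T hT
  have hDpos : 0 ≤ CFC.sqrt a := CFC.sqrt_nonneg (a := a)
  have hDsa : IsSelfAdjoint (CFC.sqrt a) := IsSelfAdjoint.of_nonneg hDpos
  set D := CFC.sqrt a with hD
  have hDD : D ∘L D = a := by
    have := CFC.sq_sqrt a hpos
    rwa [sq, ContinuousLinearMap.mul_def] at this
  have key : (inner (𝕜 := ℂ) (D h) (D h)) = inner (𝕜 := ℂ) h h - inner (𝕜 := ℂ) (T h) (T h) := by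
    calc (inner (𝕜 := ℂ) (D h) (D h)) = inner (𝕜 := ℂ) (adjoint D (D h)) h := by
          rw [adjoint_inner_left]
      _ = inner (𝕜 := ℂ) ((D ∘L D) h) h := by rw [← star_eq_adjoint, hDsa.star_eq]; rfl
      _ = inner (𝕜 := ℂ) h h - inner (𝕜 := ℂ) (T h) (T h) := by
          rw [hDD, ha]
          simp only [ContinuousLinearMap.sub_apply, ContinuousLinearMap.one_apply,
            inner_sub_left, ContinuousLinearMap.comp_apply, adjoint_inner_left]
  have := congrArg RCLike.re key
  rwa [map_sub, inner_self_eq_norm_sq, inner_self_eq_norm_sq, inner_self_eq_norm_sq] at this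

end Defect

theorem douglas_aux {E F G : Type*}
    [NormedAddCommGroup E] [InnerProductSpace ℂ E]
    [NormedAddCommGroup F] [InnerProductSpace ℂ F] [CompleteSpace F]
    [NormedAddCommGroup G] [NormedSpace ℂ G] [CompleteSpace G]
    (A : E →L[ℂ] G) (B : E →L[ℂ] F) (hAB : ∀ x, ‖A x‖ ≤ ‖B x‖) :
    ∃ C : F →L[ℂ] G, ‖C‖ ≤ 1 ∧ ∀ x, C (B x) = A x := by
  classical
  set p : Submodule ℂ F := LinearMap.range (B : E →ₗ[ℂ] F) with hp
  set K : Submodule ℂ F := p.topologicalClosure with hK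
  haveI : CompleteSpace K := p.isClosed_topologicalClosure.completeSpace_coe
  set q : Submodule ℂ K := p.comap K.subtype with hq
  set g : F → G := fun y => if h : ∃ x, B x = y then A h.choose else 0 with hg
  have hgB : ∀ x : E, g (B x) = A x := by
    intro x
    have hex : ∃ x', B x' = B x := ⟨x, rfl⟩
    rw [hg]
    simp only [dif_pos hex]
    have h1 : B hex.choose = B x := hex.choose_spec
    have h2 : ‖A hex.choose - A x‖ ≤ ‖B hex.choose - B x‖ := by
      have := hAB (hex.choose - x); simpa using this
    rw [h1, sub_self, norm_zero] at h2
    exact sub_eq_zero.mp (norm_le_zero_iff.mp h2)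
  have hrepr : ∀ y : q, ∃ x : E, B x = ((y : K) : F) := fun y => y.2
  set φ₀ : q →ₗ[ℂ] G :=
    { toFun := fun y => g ((y : K) : F)
      map_add' := by
        intro y z
        obtain ⟨x1, hx1⟩ := hrepr y
        obtain ⟨x2, hx2⟩ := hrepr z
        have h3 : (((y + z : q) : K) : F) = B (x1 + x2) := by
          push_cast
          rw [map_add, hx1, hx2]
        rw [h3, hgB, map_add, ← hx1, ← hx2, hgB, hgB]
      map_smul' := by
        intro c y
        obtain ⟨x1, hx1⟩ := hrepr y
        have h3 : (((c • y : q) : K) : F) = B (c • x1) := by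
          push_cast
          rw [map_smul, hx1]
        rw [h3, hgB, RingHom.id_apply, map_smul, ← hx1, hgB] } with hφ₀
  have hbound : ∀ y : q, ‖φ₀ y‖ ≤ 1 * ‖y‖ := by
    intro y
    obtain ⟨x, hx⟩ := hrepr y
    have h1 : φ₀ y = A x := by
      show g ((y : K) : F) = A x
      rw [← hx]; exact hgB x
    have h2 : ‖y‖ = ‖B x‖ := by
      calc ‖y‖ = ‖((y : K) : F)‖ := rfl
        _ = ‖B x‖ := by rw [hx]
    rw [h1, h2, one_mul]
    exact hAB x
  set φ : q →L[ℂ] G := LinearMap.mkContinuous φ₀ 1 hbound with hφ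
  set j : q →L[ℂ] K := q.subtypeL with hj
  have hdense : DenseRange j := by
    have hd : Dense (q : Set K) := by
      intro x
      rw [closure_subtype]
      have h1 : (p : Set F) ⊆ Subtype.val '' (q : Set K) := by
        intro y hy
        exact ⟨⟨y, p.le_topologicalClosure hy⟩, hy, rfl⟩
      have h2 : (x : F) ∈ closure (p : Set F) := by
        rw [← Submodule.topologicalClosure_coe]; exact x.2
      exact closure_mono h1 h2
    exact hd.denseRange_val
  have hub : ∀ y : q, ‖y‖ ≤ ((1 : NNReal) : ℝ) * ‖j y‖ := by
    intro y; rw [NNReal.coe_one, one_mul]; rfl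
  set ψ : K →L[ℂ] G :=
    φ.extend j with hψ
  have hψnorm : ‖ψ‖ ≤ ((1 : NNReal) : ℝ) * ‖φ‖ := φ.opNorm_extend_le (e := j) hdense hub
  have hφnorm : ‖φ‖ ≤ 1 := LinearMap.mkContinuous_norm_le φ₀ zero_le_one hbound
  have hψ1 : ‖ψ‖ ≤ 1 := by
    rw [NNReal.coe_one, one_mul] at hψnorm; linarith
  refine ⟨ψ ∘L (Submodule.orthogonalProjectionOnto K : F →L[ℂ] K), ?_, ?_⟩
  · calc ‖ψ ∘L (Submodule.orthogonalProjectionOnto K : F →L[ℂ] K)‖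
        ≤ ‖ψ‖ * ‖(Submodule.orthogonalProjectionOnto K : F →L[ℂ] K)‖ := opNorm_comp_le _ _
      _ ≤ 1 * 1 := mul_le_mul hψ1 (Submodule.orthogonalProjectionOnto_norm_le K)
          (norm_nonneg (Submodule.orthogonalProjectionOnto K : F →L[ℂ] K)) zero_le_one
      _ = 1 := one_mul 1
  · intro x
    have hmemK : B x ∈ K := p.le_topologicalClosure ⟨x, rfl⟩
    set v : K := ⟨B x, hmemK⟩ with hv
    have hproj : Submodule.orthogonalProjectionOnto K (B x) = v :=
      Submodule.orthogonalProjectionOnto_mem_subspace_eq_self v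
    have hvq : v ∈ q := by show (v : F) ∈ p; exact ⟨x, rfl⟩
    have h4 : ψ v = φ ⟨v, hvq⟩ :=
      ContinuousLinearMap.extend_eq φ (e := j) hdense
        (isUniformEmbedding_of_bound j hub).isUniformInducing ⟨v, hvq⟩
    rw [ContinuousLinearMap.comp_apply, hproj, h4]
    show g (B x) = A x
    exact hgB x

noncomputable def inlL2 (E F : Type*)
    [NormedAddCommGroup E] [NormedSpace ℂ E] [NormedAddCommGroup F] [NormedSpace ℂ F] :
    E →L[ℂ] WithLp 2 (E × F) :=
  ((WithLp.prodContinuousLinearEquiv 2 ℂ E F).symm : (E × F) →L[ℂ] WithLp 2 (E × F)) ∘L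
    ContinuousLinearMap.inl ℂ E F

noncomputable def inrL2 (E F : Type*)
    [NormedAddCommGroup E] [NormedSpace ℂ E] [NormedAddCommGroup F] [NormedSpace ℂ F] :
    F →L[ℂ] WithLp 2 (E × F) :=
  ((WithLp.prodContinuousLinearEquiv 2 ℂ E F).symm : (E × F) →L[ℂ] WithLp 2 (E × F)) ∘L
    ContinuousLinearMap.inr ℂ E F

section Helpers

variable {E F G : Type*}
    [NormedAddCommGroup E] [NormedSpace ℂ E] [NormedAddCommGroup F] [NormedSpace ℂ F]
    [NormedAddCommGroup G] [NormedSpace ℂ G]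

theorem inlL2_fst (x : E) : (inlL2 E F x).fst = x := rfl
theorem inlL2_snd (x : E) : (inlL2 E F x).snd = 0 := rfl
theorem inrL2_fst (x : F) : (inrL2 E F x).fst = 0 := rfl
theorem inrL2_snd (x : F) : (inrL2 E F x).snd = x := rfl

theorem inlL2_norm (x : E) : ‖inlL2 E F x‖ = ‖x‖ := by
  have h := WithLp.prod_norm_sq_eq_of_L2 (inlL2 E F x)
  rw [inlL2_fst, inlL2_snd, norm_zero] at h
  nlinarith [norm_nonneg (inlL2 E F x), norm_nonneg x]

theorem blockLT_fst {E1 E2 F1 F2 : Type*}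
    [NormedAddCommGroup E1] [NormedSpace ℂ E1] [NormedAddCommGroup E2] [NormedSpace ℂ E2]
    [NormedAddCommGroup F1] [NormedSpace ℂ F1] [NormedAddCommGroup F2] [NormedSpace ℂ F2]
    (f : E1 →L[ℂ] F1) (g : E1 →L[ℂ] F2) (h : E2 →L[ℂ] F2) (x : WithLp 2 (E1 × E2)) :
    (blockLowerTriangular f g h x).fst = f x.fst := rfl

theorem blockLT_snd {E1 E2 F1 F2 : Type*}
    [NormedAddCommGroup E1] [NormedSpace ℂ E1] [NormedAddCommGroup E2] [NormedSpace ℂ E2]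
    [NormedAddCommGroup F1] [NormedSpace ℂ F1] [NormedAddCommGroup F2] [NormedSpace ℂ F2]
    (f : E1 →L[ℂ] F1) (g : E1 →L[ℂ] F2) (h : E2 →L[ℂ] F2) (x : WithLp 2 (E1 × E2)) :
    (blockLowerTriangular f g h x).snd = g x.fst + h x.snd := rfl

omit [NormedAddCommGroup E] [NormedSpace ℂ E] [NormedAddCommGroup F] [NormedSpace ℂ F] in
theorem withLp_prod_ext {x y : WithLp 2 (E × F)} (h1 : x.fst = y.fst) (h2 : x.snd = y.snd) :
    x = y := WithLp.ofLp_injective 2 (Prod.ext h1 h2)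

theorem norm_le_of_sq_le_sq {a b : ℝ} (h : a ^ 2 ≤ b ^ 2) (hb : 0 ≤ b) : a ≤ b := by
  nlinarith [abs_nonneg a, sq_abs a, le_abs_self a]

end Helpers

section Adj
variable {E F G : Type*}
    [NormedAddCommGroup E] [InnerProductSpace ℂ E] [CompleteSpace E]
    [NormedAddCommGroup F] [InnerProductSpace ℂ F] [CompleteSpace F]
    [NormedAddCommGroup G] [InnerProductSpace ℂ G] [CompleteSpace G]

theorem adjoint_fst (L : WithLp 2 (E × F) →L[ℂ] G) (y : G) :
    (adjoint L y).fst = adjoint (L ∘L inlL2 E F) y := by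
  apply ext_inner_left ℂ
  intro v
  have h1 : inner (𝕜 := ℂ) v ((adjoint L y).fst) = inner (𝕜 := ℂ) (inlL2 E F v) (adjoint L y) := by
    rw [WithLp.prod_inner_apply]
    change _ = inner ℂ (inlL2 E F v).fst (adjoint L y).fst + inner ℂ (inlL2 E F v).snd (adjoint L y).snd
    rw [inlL2_fst, inlL2_snd, inner_zero_left, add_zero]
  rw [h1, adjoint_inner_right, adjoint_inner_right, ContinuousLinearMap.comp_apply]

theorem adjoint_snd (L : WithLp 2 (E × F) →L[ℂ] G) (y : G) :
    (adjoint L y).snd = adjoint (L ∘L inrL2 E F) y := by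
  apply ext_inner_left ℂ
  intro v
  have h1 : inner (𝕜 := ℂ) v ((adjoint L y).snd) = inner (𝕜 := ℂ) (inrL2 E F v) (adjoint L y) := by
    rw [WithLp.prod_inner_apply]
    change _ = inner ℂ (inrL2 E F v).fst (adjoint L y).fst + inner ℂ (inrL2 E F v).snd (adjoint L y).snd
    rw [inrL2_fst, inrL2_snd, inner_zero_left, zero_add]
  rw [h1, adjoint_inner_right, adjoint_inner_right, ContinuousLinearMap.comp_apply]

theorem adjoint_norm_sq (L : WithLp 2 (E × F) →L[ℂ] G) (y : G) :
    ‖adjoint L y‖ ^ 2 = ‖adjoint (L ∘L inlL2 E F) y‖ ^ 2 + ‖adjoint (L ∘L inrL2 E F) y‖ ^ 2 := by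
  rw [WithLp.prod_norm_sq_eq_of_L2, adjoint_fst, adjoint_snd]

theorem norm_adjoint_eq (L : E →L[ℂ] F) : ‖adjoint L‖ = ‖L‖ :=
  LinearIsometryEquiv.norm_map (ContinuousLinearMap.adjoint : (E →L[ℂ] F) ≃ₗᵢ⋆[ℂ] (F →L[ℂ] E)) L
end Adj

set_option maxHeartbeats 1000000 in
set_option synthInstance.maxHeartbeats 400000 in
theorem block_contraction_iff_defect_factorization {H1 H2 H1' H2' : Type*}
    [NormedAddCommGroup H1] [InnerProductSpace ℂ H1] [CompleteSpace H1]
    [NormedAddCommGroup H2] [InnerProductSpace ℂ H2] [CompleteSpace H2]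
    [NormedAddCommGroup H1'] [InnerProductSpace ℂ H1'] [CompleteSpace H1']
    [NormedAddCommGroup H2'] [InnerProductSpace ℂ H2'] [CompleteSpace H2']
    (T1 : H1 →L[ℂ] H1') (T2 : H2 →L[ℂ] H2') (X : H1 →L[ℂ] H2')
    (hT1 : ‖T1‖ ≤ 1) (hT2 : ‖T2‖ ≤ 1) :
    ‖blockLowerTriangular T1 X T2‖ ≤ 1 ↔
      ∃ C : H1 →L[ℂ] H2', ‖C‖ ≤ 1 ∧
        X = CFC.sqrt (1 - T2 ∘L adjoint T2) ∘L C ∘L CFC.sqrt (1 - adjoint T1 ∘L T1) := by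
  set D1 : H1 →L[ℂ] H1 := CFC.sqrt (1 - adjoint T1 ∘L T1) with hD1def
  set D2 : H2' →L[ℂ] H2' := CFC.sqrt (1 - T2 ∘L adjoint T2) with hD2def
  have hT2' : ‖adjoint T2‖ ≤ 1 := by rw [norm_adjoint_eq]; exact hT2
  have hD1sq : ∀ h : H1, ‖D1 h‖ ^ 2 = ‖h‖ ^ 2 - ‖T1 h‖ ^ 2 := aux_norm_defect_sq T1 hT1
  have hD2sq : ∀ y : H2', ‖D2 y‖ ^ 2 = ‖y‖ ^ 2 - ‖adjoint T2 y‖ ^ 2 := by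
    intro y
    have h := aux_norm_defect_sq (adjoint T2) hT2' y
    rwa [adjoint_adjoint] at h
  have hD2sa : adjoint D2 = D2 := by
    have h1 : IsSelfAdjoint D2 := by
      rw [hD2def]
      exact IsSelfAdjoint.of_nonneg (CFC.sqrt_nonneg (a := 1 - T2 ∘L adjoint T2))
    rw [← star_eq_adjoint, h1.star_eq]
  constructor
  · -- forward direction
    intro hY
    set A : WithLp 2 (H1 × H2) →L[ℂ] H2' := (X.coprod T2) ∘L
      ((WithLp.prodContinuousLinearEquiv 2 ℂ H1 H2) : WithLp 2 (H1 × H2) →L[ℂ] H1 × H2) with hA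
    set B : WithLp 2 (H1 × H2) →L[ℂ] WithLp 2 (H1 × H2) :=
      blockLowerTriangular D1 (0 : H1 →L[ℂ] H2) (1 : H2 →L[ℂ] H2) with hB
    have hAapp : ∀ z : WithLp 2 (H1 × H2), A z = X z.fst + T2 z.snd := fun z => rfl
    have hBsnd : ∀ z : WithLp 2 (H1 × H2), (B z).snd = z.snd := by
      intro z
      rw [hB, blockLT_snd]
      simp
    have hAB : ∀ z : WithLp 2 (H1 × H2), ‖A z‖ ≤ ‖B z‖ := by
      intro z
      have hYz : ‖blockLowerTriangular T1 X T2 z‖ ≤ ‖z‖ := by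
        have := (blockLowerTriangular T1 X T2).le_of_opNorm_le hY z
        simpa using this
      have hYz2 : ‖blockLowerTriangular T1 X T2 z‖ ^ 2 ≤ ‖z‖ ^ 2 :=
        pow_le_pow_left₀ (norm_nonneg _) hYz 2
      have e1 : ‖blockLowerTriangular T1 X T2 z‖ ^ 2
          = ‖T1 z.fst‖ ^ 2 + ‖X z.fst + T2 z.snd‖ ^ 2 := by
        rw [WithLp.prod_norm_sq_eq_of_L2, blockLT_fst, blockLT_snd]
      have e2 : ‖z‖ ^ 2 = ‖z.fst‖ ^ 2 + ‖z.snd‖ ^ 2 := WithLp.prod_norm_sq_eq_of_L2 z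
      have e3 : ‖B z‖ ^ 2 = ‖D1 z.fst‖ ^ 2 + ‖z.snd‖ ^ 2 := by
        rw [WithLp.prod_norm_sq_eq_of_L2, hBsnd]
        rfl
      apply norm_le_of_sq_le_sq _ (norm_nonneg _)
      rw [hAapp, e3, hD1sq]
      rw [e1, e2] at hYz2
      linarith
    obtain ⟨L, hL1, hL2⟩ := douglas_aux A B hAB
    set C' : H1 →L[ℂ] H2' := L ∘L inlL2 H1 H2 with hC'
    have hC'X : ∀ h : H1, C' (D1 h) = X h := by
      intro h
      have h1 : inlL2 H1 H2 (D1 h) = B (inlL2 H1 H2 h) := by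
        apply withLp_prod_ext
        · rfl
        · rw [hB, blockLT_snd, inlL2_snd, inlL2_snd]
          simp
      calc C' (D1 h) = L (inlL2 H1 H2 (D1 h)) := rfl
        _ = L (B (inlL2 H1 H2 h)) := by rw [h1]
        _ = A (inlL2 H1 H2 h) := hL2 _
        _ = X h := by rw [hAapp, inlL2_fst, inlL2_snd, map_zero, add_zero]
    have hT2L : ∀ k : H2, (L ∘L inrL2 H1 H2) k = T2 k := by
      intro k
      have h1 : inrL2 H1 H2 k = B (inrL2 H1 H2 k) := by
        apply withLp_prod_ext
        · rw [hB, blockLT_fst, inrL2_fst]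
          simp
        · rw [hB, blockLT_snd, inrL2_fst, inrL2_snd]
          simp
      calc (L ∘L inrL2 H1 H2) k = L (inrL2 H1 H2 k) := rfl
        _ = L (B (inrL2 H1 H2 k)) := by rw [← h1]
        _ = A (inrL2 H1 H2 k) := hL2 _
        _ = T2 k := by rw [hAapp, inrL2_fst, inrL2_snd, map_zero, zero_add]
    have hLT2 : L ∘L inrL2 H1 H2 = T2 := ContinuousLinearMap.ext hT2L
    -- adjoint bound
    have hadj : ∀ y : H2', ‖adjoint C' y‖ ≤ ‖D2 y‖ := by
      intro y
      have h1 : ‖adjoint L y‖ ^ 2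
          = ‖adjoint C' y‖ ^ 2 + ‖adjoint T2 y‖ ^ 2 := by
        rw [adjoint_norm_sq, ← hC', hLT2]
      have h2 : ‖adjoint L y‖ ≤ ‖y‖ := by
        have h3 : ‖adjoint L‖ ≤ 1 := by rw [norm_adjoint_eq]; exact hL1
        have := (adjoint L).le_of_opNorm_le h3 y
        simpa using this
      apply norm_le_of_sq_le_sq _ (norm_nonneg _)
      rw [hD2sq]
      have h2sq : ‖adjoint L y‖ ^ 2 ≤ ‖y‖ ^ 2 := pow_le_pow_left₀ (norm_nonneg _) h2 2
      linarith
    obtain ⟨K, hK1, hK2⟩ := douglas_aux (adjoint C') D2 hadj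
    refine ⟨adjoint K, ?_, ?_⟩
    · rw [norm_adjoint_eq]; exact hK1
    · have hCK : adjoint C' = K ∘L D2 := by
        ext y
        exact (hK2 y).symm
      have : C' = D2 ∘L adjoint K := by
        calc C' = adjoint (adjoint C') := (adjoint_adjoint C').symm
          _ = adjoint (K ∘L D2) := by rw [hCK]
          _ = adjoint D2 ∘L adjoint K := adjoint_comp K D2
          _ = D2 ∘L adjoint K := by rw [hD2sa]
      ext h
      calc X h = C' (D1 h) := (hC'X h).symm
        _ = (D2 ∘L adjoint K) (D1 h) := by rw [this]
        _ = (D2 ∘L adjoint K ∘L D1) h := rfl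
  · -- backward direction
    rintro ⟨C, hC, hX⟩
    -- the row operator is a contraction
    set R : WithLp 2 (H2' × H2) →L[ℂ] H2' := (D2.coprod T2) ∘L
      ((WithLp.prodContinuousLinearEquiv 2 ℂ H2' H2) : WithLp 2 (H2' × H2) →L[ℂ] H2' × H2)
      with hR
    have hRapp : ∀ z : WithLp 2 (H2' × H2), R z = D2 z.fst + T2 z.snd := fun z => rfl
    have hRinl : R ∘L inlL2 H2' H2 = D2 := by
      ext u
      calc (R ∘L inlL2 H2' H2) u = D2 (inlL2 H2' H2 u).fst + T2 (inlL2 H2' H2 u).snd := rfl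
        _ = D2 u := by rw [inlL2_fst, inlL2_snd, map_zero, add_zero]
    have hRinr : R ∘L inrL2 H2' H2 = T2 := by
      ext u
      calc (R ∘L inrL2 H2' H2) u = D2 (inrL2 H2' H2 u).fst + T2 (inrL2 H2' H2 u).snd := rfl
        _ = T2 u := by rw [inrL2_fst, inrL2_snd, map_zero, zero_add]
    have hRnorm : ‖R‖ ≤ 1 := by
      rw [← norm_adjoint_eq]
      apply ContinuousLinearMap.opNorm_le_bound _ zero_le_one
      intro y
      rw [one_mul]
      apply norm_le_of_sq_le_sq _ (norm_nonneg y)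
      rw [adjoint_norm_sq, hRinl, hRinr, hD2sa, hD2sq]
      linarith
    have hrow : ∀ (u : H2') (k : H2), ‖D2 u + T2 k‖ ^ 2 ≤ ‖u‖ ^ 2 + ‖k‖ ^ 2 := by
      intro u k
      set z : WithLp 2 (H2' × H2) :=
        (WithLp.prodContinuousLinearEquiv 2 ℂ H2' H2).symm (u, k) with hz
      have h1 : R z = D2 u + T2 k := rfl
      have h2 : ‖z‖ ^ 2 = ‖u‖ ^ 2 + ‖k‖ ^ 2 := WithLp.prod_norm_sq_eq_of_L2 z
      have h3 : ‖R z‖ ≤ ‖z‖ := by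
        have := R.le_of_opNorm_le hRnorm z
        simpa using this
      rw [← h1, ← h2]
      exact pow_le_pow_left₀ (norm_nonneg _) h3 2
    apply ContinuousLinearMap.opNorm_le_bound _ zero_le_one
    intro z
    rw [one_mul]
    apply norm_le_of_sq_le_sq _ (norm_nonneg z)
    have e1 : ‖blockLowerTriangular T1 X T2 z‖ ^ 2
        = ‖T1 z.fst‖ ^ 2 + ‖X z.fst + T2 z.snd‖ ^ 2 := by
      rw [WithLp.prod_norm_sq_eq_of_L2, blockLT_fst, blockLT_snd]
    have e2 : ‖z‖ ^ 2 = ‖z.fst‖ ^ 2 + ‖z.snd‖ ^ 2 := WithLp.prod_norm_sq_eq_of_L2 z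
    have e3 : X z.fst = D2 (C (D1 z.fst)) := by rw [hX]; rfl
    have e4 : ‖X z.fst + T2 z.snd‖ ^ 2 ≤ ‖C (D1 z.fst)‖ ^ 2 + ‖z.snd‖ ^ 2 := by
      rw [e3]; exact hrow _ _
    have e5 : ‖C (D1 z.fst)‖ ≤ ‖D1 z.fst‖ := by
      have := C.le_of_opNorm_le hC (D1 z.fst)
      simpa using this
    have e6 : ‖C (D1 z.fst)‖ ^ 2 ≤ ‖D1 z.fst‖ ^ 2 :=
      pow_le_pow_left₀ (norm_nonneg _) e5 2
    have e7 := hD1sq z.fst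
    rw [e1, e2]
    linarith
end

section
/- Let H0, H1, H2, K be complex Hilbert spaces and A_i ∈ B(H_i, K) for i = 0, 1, 2. There exist operators Z1 ∈ B(H0, H1) and Z2 ∈ B(H0, H2) satisfying A1 Z1 + A2 Z2 = A0 and Z1* Z1 + Z2* Z2 ≤ I_{H0} if and only if A1 A1* + A2 A2* ≥ A0 A0*. -/
open ContinuousLinearMap

section DMPaux
set_option linter.unusedSectionVars false

variable {E F K' : Type*}
  [NormedAddCommGroup E] [InnerProductSpace ℂ E] [CompleteSpace E]
  [NormedAddCommGroup F] [InnerProductSpace ℂ F] [CompleteSpace F]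
  [NormedAddCommGroup K'] [InnerProductSpace ℂ K'] [CompleteSpace K']

lemma dmp_re_inner (A : E →L[ℂ] K') (k : K') :
    RCLike.re (inner ℂ ((A ∘L adjoint A) k) k : ℂ) = ‖adjoint A k‖ ^ 2 := by
  rw [coe_comp', Function.comp_apply]
  nth_rewrite 1 [← adjoint_adjoint A]
  rw [adjoint_inner_left, inner_self_eq_norm_sq]

lemma dmp_selfadj (A : E →L[ℂ] K') (B : F →L[ℂ] K') :
    IsSelfAdjoint (B ∘L adjoint B - A ∘L adjoint A) := by
  rw [IsSelfAdjoint, star_eq_adjoint, map_sub, adjoint_comp, adjoint_comp,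
    adjoint_adjoint, adjoint_adjoint]

lemma dmp_pos_iff (A : E →L[ℂ] K') (B : F →L[ℂ] K') :
    (B ∘L adjoint B - A ∘L adjoint A).IsPositive ↔
      ∀ k, ‖adjoint A k‖ ≤ ‖adjoint B k‖ := by
  have key : ∀ k, (B ∘L adjoint B - A ∘L adjoint A).reApplyInnerSelf k
      = ‖adjoint B k‖ ^ 2 - ‖adjoint A k‖ ^ 2 := by
    intro k
    rw [reApplyInnerSelf_apply, sub_apply, inner_sub_left, map_sub,
      dmp_re_inner, dmp_re_inner]
  constructor
  · rintro ⟨-, hpos⟩ k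
    have := hpos k
    rw [key, sub_nonneg] at this
    exact (pow_le_pow_iff_left₀ (norm_nonneg _) (norm_nonneg _) two_ne_zero).mp this
  · intro h
    refine ⟨(dmp_selfadj A B).isSymmetric, fun k => ?_⟩
    rw [key, sub_nonneg]
    exact pow_le_pow_left₀ (norm_nonneg _) (h k) 2

lemma dmp_contraction (Z : E →L[ℂ] F) :
    (1 - adjoint Z ∘L Z).IsPositive ↔ ‖Z‖ ≤ 1 := by
  have key : ∀ x : E, (1 - adjoint Z ∘L Z).reApplyInnerSelf x = ‖x‖ ^ 2 - ‖Z x‖ ^ 2 := by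
    intro x
    rw [reApplyInnerSelf_apply, sub_apply, ContinuousLinearMap.one_apply, inner_sub_left, map_sub,
      inner_self_eq_norm_sq, coe_comp', Function.comp_apply, adjoint_inner_left,
      inner_self_eq_norm_sq]
  constructor
  · rintro ⟨-, hpos⟩
    refine opNorm_le_bound Z zero_le_one (fun x => ?_)
    rw [one_mul]
    have := hpos x
    rw [key, sub_nonneg] at this
    exact (pow_le_pow_iff_left₀ (norm_nonneg _) (norm_nonneg _) two_ne_zero).mp this
  · intro hZ
    constructor
    · apply IsSelfAdjoint.isSymmetric
      rw [IsSelfAdjoint, star_sub, star_one, star_eq_adjoint, adjoint_comp, adjoint_adjoint]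
    · intro x
      rw [key, sub_nonneg]
      apply pow_le_pow_left₀ (norm_nonneg _)
      calc ‖Z x‖ ≤ ‖Z‖ * ‖x‖ := Z.le_opNorm x
      _ ≤ 1 * ‖x‖ := mul_le_mul_of_nonneg_right hZ (norm_nonneg x)
      _ = ‖x‖ := one_mul _

lemma dmp_douglas (A : E →L[ℂ] K') (B : F →L[ℂ] K')
    (h : ∀ k, ‖adjoint A k‖ ≤ ‖adjoint B k‖) :
    ∃ Z : E →L[ℂ] F, B ∘L Z = A ∧ ‖Z‖ ≤ 1 := by
  classical
  set f : K' →ₗ[ℂ] F := (adjoint B : K' →L[ℂ] F).toLinearMap with hf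
  set g : K' →ₗ[ℂ] E := (adjoint A : K' →L[ℂ] E).toLinearMap with hg
  have hker : LinearMap.ker f ≤ LinearMap.ker g := by
    intro x hx
    rw [LinearMap.mem_ker] at hx ⊢
    have := h x
    rw [hf] at hx
    simp only [ContinuousLinearMap.coe_coe] at hx
    rw [hx, norm_zero] at this
    have : ‖adjoint A x‖ = 0 := le_antisymm this (norm_nonneg _)
    simpa [hg, norm_eq_zero] using this
  set φ : LinearMap.range f →ₗ[ℂ] E :=
    ((LinearMap.ker f).liftQ g hker).comp f.quotKerEquivRange.symm.toLinearMap with hφdef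
  have hφ : ∀ k : K', φ ⟨f k, LinearMap.mem_range_self f k⟩ = adjoint A k := by
    intro k
    rw [hφdef]
    simp only [LinearMap.coe_comp, Function.comp_apply, LinearEquiv.coe_coe]
    rw [f.quotKerEquivRange_symm_apply_image k (LinearMap.mem_range_self f k)]
    simp [Submodule.liftQ_apply, hg]
  have hbound : ∀ x : LinearMap.range f, ‖φ x‖ ≤ 1 * ‖x‖ := by
    rintro ⟨x, hx⟩
    obtain ⟨k, rfl⟩ := hx
    rw [hφ k, one_mul]
    exact (h k).trans (le_of_eq rfl)
  set φL : LinearMap.range f →L[ℂ] E := φ.mkContinuous 1 hbound with hφL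
  set Fc : Submodule ℂ F := (LinearMap.range f).topologicalClosure with hFc
  set ιl : LinearMap.range f →ₗ[ℂ] Fc :=
    Submodule.inclusion (Submodule.le_topologicalClosure _) with hιl
  have hιnorm : ∀ x : LinearMap.range f, ‖ιl x‖ = ‖x‖ := fun x => rfl
  set ι : LinearMap.range f →L[ℂ] Fc :=
    ιl.mkContinuous 1 (fun x => by rw [hιnorm, one_mul]) with hι
  have h_e : ∀ x, ‖x‖ ≤ (1 : NNReal) * ‖ι x‖ := by
    intro x
    rw [NNReal.coe_one, one_mul]
    exact le_of_eq (hιnorm x).symm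
  have h_dense : DenseRange ι := by
    intro y
    rw [closure_subtype]
    have : Subtype.val '' Set.range ι = (LinearMap.range f : Set F) := by
      ext z
      constructor
      · rintro ⟨w, ⟨u, rfl⟩, rfl⟩
        exact u.2
      · rintro hz
        exact ⟨ι ⟨z, hz⟩, ⟨⟨z, hz⟩, rfl⟩, rfl⟩
    rw [this]
    exact y.2
  haveI : CompleteSpace Fc := (Submodule.isClosed_topologicalClosure _).completeSpace_coe
  set T0 : Fc →L[ℂ] E :=
    φL.extend ι with hT0
  have hT0norm : ‖T0‖ ≤ 1 := by
    have := opNorm_extend_le φL h_dense h_e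
    have h2 : ‖φL‖ ≤ 1 := φ.mkContinuous_norm_le zero_le_one hbound
    calc ‖T0‖ ≤ (1 : NNReal) * ‖φL‖ := this
    _ ≤ 1 := by rw [NNReal.coe_one, one_mul]; exact h2
  set T : F →L[ℂ] E := T0 ∘L (Fc.orthogonalProjectionOnto) with hT
  have hTB : ∀ k, T (adjoint B k) = adjoint A k := by
    intro k
    have hmem : adjoint B k ∈ Fc := Submodule.le_topologicalClosure _ (LinearMap.mem_range_self f k)
    have hproj : Fc.orthogonalProjectionOnto (adjoint B k) = ⟨adjoint B k, hmem⟩ :=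
      Submodule.orthogonalProjectionOnto_mem_subspace_eq_self (⟨adjoint B k, hmem⟩ : Fc)
    have hιval : ι ⟨adjoint B k, LinearMap.mem_range_self f k⟩ = ⟨adjoint B k, hmem⟩ := rfl
    rw [hT, coe_comp', Function.comp_apply, hproj, ← hιval]
    rw [hT0, ContinuousLinearMap.extend_eq _ h_dense (isUniformEmbedding_of_bound ι h_e).isUniformInducing]
    rw [hφL]
    exact hφ k
  refine ⟨adjoint T, ?_, ?_⟩
  · have : adjoint (B ∘L adjoint T) = adjoint A := by
      rw [adjoint_comp, adjoint_adjoint]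
      exact ContinuousLinearMap.ext hTB
    have := congrArg adjoint this
    rwa [adjoint_adjoint, adjoint_adjoint] at this
  · rw [LinearIsometryEquiv.norm_map (adjoint : (F →L[ℂ] E) ≃ₗᵢ⋆[ℂ] (E →L[ℂ] F)) T]
    calc ‖T‖ ≤ ‖T0‖ * ‖(Fc.orthogonalProjectionOnto : F →L[ℂ] Fc)‖ := opNorm_comp_le _ _
    _ ≤ 1 * 1 := mul_le_mul hT0norm (Submodule.orthogonalProjectionOnto_norm_le _)
        (norm_nonneg ((Fc.orthogonalProjectionOnto : F →L[ℂ] Fc))) zero_le_one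
    _ = 1 := one_mul 1

end DMPaux

section DMPprod
set_option linter.unusedSectionVars false

variable {H1 H2 : Type*}
  [NormedAddCommGroup H1] [InnerProductSpace ℂ H1] [CompleteSpace H1]
  [NormedAddCommGroup H2] [InnerProductSpace ℂ H2] [CompleteSpace H2]

noncomputable def dmpFst : WithLp 2 (H1 × H2) →L[ℂ] H1 :=
  (ContinuousLinearMap.fst ℂ H1 H2) ∘L
    (WithLp.prodContinuousLinearEquiv 2 ℂ H1 H2 : WithLp 2 (H1 × H2) →L[ℂ] H1 × H2)

noncomputable def dmpSnd : WithLp 2 (H1 × H2) →L[ℂ] H2 :=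
  (ContinuousLinearMap.snd ℂ H1 H2) ∘L
    (WithLp.prodContinuousLinearEquiv 2 ℂ H1 H2 : WithLp 2 (H1 × H2) →L[ℂ] H1 × H2)

noncomputable def dmpInl : H1 →L[ℂ] WithLp 2 (H1 × H2) :=
  ((WithLp.prodContinuousLinearEquiv 2 ℂ H1 H2).symm : H1 × H2 →L[ℂ] WithLp 2 (H1 × H2)) ∘L
    (ContinuousLinearMap.inl ℂ H1 H2)

noncomputable def dmpInr : H2 →L[ℂ] WithLp 2 (H1 × H2) :=
  ((WithLp.prodContinuousLinearEquiv 2 ℂ H1 H2).symm : H1 × H2 →L[ℂ] WithLp 2 (H1 × H2)) ∘L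
    (ContinuousLinearMap.inr ℂ H1 H2)

@[simp] lemma dmpFst_apply (x : WithLp 2 (H1 × H2)) : dmpFst x = x.fst := rfl
@[simp] lemma dmpSnd_apply (x : WithLp 2 (H1 × H2)) : dmpSnd x = x.snd := rfl
@[simp] lemma dmpInl_fst (x : H1) : (dmpInl (H2 := H2) x).fst = x := rfl
@[simp] lemma dmpInl_snd (x : H1) : (dmpInl (H2 := H2) x).snd = 0 := rfl
@[simp] lemma dmpInr_fst (x : H2) : (dmpInr (H1 := H1) x).fst = 0 := rfl
@[simp] lemma dmpInr_snd (x : H2) : (dmpInr (H1 := H1) x).snd = x := rfl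

lemma dmp_adjoint_fst : adjoint (dmpFst (H1 := H1) (H2 := H2)) = dmpInl := by
  symm
  rw [eq_adjoint_iff]
  intro x y
  simp [WithLp.prod_inner_apply]

lemma dmp_adjoint_snd : adjoint (dmpSnd (H1 := H1) (H2 := H2)) = dmpInr := by
  symm
  rw [eq_adjoint_iff]
  intro x y
  simp [WithLp.prod_inner_apply]

lemma dmp_id_apply (x : WithLp 2 (H1 × H2)) : dmpInl x.fst + dmpInr x.snd = x := by
  refine WithLp.ofLp_injective 2 (Prod.ext ?_ ?_) <;>
    simp [WithLp.add_fst, WithLp.add_snd]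

end DMPprod

open ContinuousLinearMap in
theorem douglas_muhly_pearcy {H0 H1 H2 K : Type*}
    [NormedAddCommGroup H0] [InnerProductSpace ℂ H0] [CompleteSpace H0]
    [NormedAddCommGroup H1] [InnerProductSpace ℂ H1] [CompleteSpace H1]
    [NormedAddCommGroup H2] [InnerProductSpace ℂ H2] [CompleteSpace H2]
    [NormedAddCommGroup K] [InnerProductSpace ℂ K] [CompleteSpace K]
    (A0 : H0 →L[ℂ] K) (A1 : H1 →L[ℂ] K) (A2 : H2 →L[ℂ] K) :
    (∃ (Z1 : H0 →L[ℂ] H1) (Z2 : H0 →L[ℂ] H2),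
        A1 ∘L Z1 + A2 ∘L Z2 = A0 ∧
        (1 - (adjoint Z1 ∘L Z1 + adjoint Z2 ∘L Z2)).IsPositive) ↔
      (A1 ∘L adjoint A1 + A2 ∘L adjoint A2 - A0 ∘L adjoint A0).IsPositive := by
  set B : WithLp 2 (H1 × H2) →L[ℂ] K := A1 ∘L dmpFst + A2 ∘L dmpSnd with hB
  have hadjB : adjoint B = dmpInl ∘L adjoint A1 + dmpInr ∘L adjoint A2 := by
    rw [hB, map_add, adjoint_comp, adjoint_comp, dmp_adjoint_fst, dmp_adjoint_snd]
  have hBB : B ∘L adjoint B = A1 ∘L adjoint A1 + A2 ∘L adjoint A2 := by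
    ext k
    simp [hB, hadjB, WithLp.add_fst, WithLp.add_snd, dmp_adjoint_fst, dmp_adjoint_snd]
  have hZZ : ∀ Z : H0 →L[ℂ] WithLp 2 (H1 × H2),
      adjoint (dmpFst ∘L Z) ∘L (dmpFst ∘L Z) + adjoint (dmpSnd ∘L Z) ∘L (dmpSnd ∘L Z)
        = adjoint Z ∘L Z := by
    intro Z
    ext x
    simp only [add_apply, coe_comp', Function.comp_apply, adjoint_comp,
      dmp_adjoint_fst, dmp_adjoint_snd, dmpFst_apply, dmpSnd_apply]
    rw [← map_add (adjoint Z)]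
    congr 1
    exact dmp_id_apply (Z x)
  constructor
  · rintro ⟨Z1, Z2, hsum, hpos⟩
    set Z : H0 →L[ℂ] WithLp 2 (H1 × H2) := dmpInl ∘L Z1 + dmpInr ∘L Z2 with hZdef
    have h1 : dmpFst ∘L Z = Z1 := by
      ext x
      simp [hZdef, WithLp.add_fst]
    have h2 : dmpSnd ∘L Z = Z2 := by
      ext x
      simp [hZdef, WithLp.add_snd]
    have hBZ : B ∘L Z = A0 := by
      ext x
      simp only [hB, hZdef, coe_comp', Function.comp_apply, add_apply]
      rw [← hsum]
      simp [WithLp.add_fst, WithLp.add_snd]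
    have hZZeq : adjoint Z ∘L Z = adjoint Z1 ∘L Z1 + adjoint Z2 ∘L Z2 := by
      have := hZZ Z
      rw [h1, h2] at this
      exact this.symm
    have hnorm : ‖Z‖ ≤ 1 := (dmp_contraction Z).mp (by rwa [hZZeq])
    rw [← hBB]
    refine (dmp_pos_iff A0 B).mpr (fun k => ?_)
    rw [← hBZ, adjoint_comp]
    calc ‖(adjoint Z ∘L adjoint B) k‖ ≤ ‖adjoint Z‖ * ‖adjoint B k‖ := by
          rw [coe_comp', Function.comp_apply]; exact (adjoint Z).le_opNorm _
    _ ≤ 1 * ‖adjoint B k‖ := by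
          apply mul_le_mul_of_nonneg_right _ (norm_nonneg _)
          rwa [LinearIsometryEquiv.norm_map
            (adjoint : (H0 →L[ℂ] WithLp 2 (H1 × H2)) ≃ₗᵢ⋆[ℂ] _) Z]
    _ = ‖adjoint B k‖ := one_mul _
  · intro h
    rw [← hBB] at h
    obtain ⟨Z, hBZ, hZnorm⟩ := dmp_douglas A0 B ((dmp_pos_iff A0 B).mp h)
    refine ⟨dmpFst ∘L Z, dmpSnd ∘L Z, ?_, ?_⟩
    · ext x
      simp only [add_apply, coe_comp', Function.comp_apply]
      rw [← hBZ]
      simp [hB]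
    · rw [hZZ Z]
      exact (dmp_contraction Z).mpr hZnorm
end

section
/- Let V, V_q, X be bounded operators on a complex Hilbert space K with V V* = I, (q V_q)(q V_q)* = I for a complex number q, ‖X‖ < 1, and V X = q • (X V_q). Then (D_{X*}^{-1} V D_{X*}) (D_{X*}^{-1} V D_{X*})* = I, i.e., D_{X*}^{-1} V D_{X*} is a co-isometry, where D_{X*} = (I − X X*)^{1/2}. -/
set_option maxHeartbeats 1000000 in
set_option synthInstance.maxHeartbeats 200000 in
open ContinuousLinearMap in
theorem conjugated_coisometry {K : Type*} [NormedAddCommGroup K]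
    [InnerProductSpace ℂ K] [CompleteSpace K] (V Vq X : K →L[ℂ] K) (q : ℂ)
    (hV : V ∘L adjoint V = 1) (hVq : (q • Vq) ∘L adjoint (q • Vq) = 1)
    (hX : ‖X‖ < 1) (hint : V ∘L X = q • (X ∘L Vq)) :
    (Ring.inverse (CFC.sqrt (1 - X ∘L adjoint X)) ∘L V ∘L CFC.sqrt (1 - X ∘L adjoint X)) ∘L
        adjoint (Ring.inverse (CFC.sqrt (1 - X ∘L adjoint X)) ∘L V ∘L
          CFC.sqrt (1 - X ∘L adjoint X)) = 1 := by
  simp only [← ContinuousLinearMap.mul_def, ← ContinuousLinearMap.star_eq_adjoint] at *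
  set A : K →L[ℂ] K := 1 - X * star X with hAdef
  -- A is nonnegative
  have hn2 : ‖X‖ * ‖X‖ < 1 := by
    simpa using mul_lt_mul' hX.le hX (norm_nonneg X) one_pos
  have hnorm : ‖X * star X‖ < 1 := by
    rw [CStarRing.norm_self_mul_star]; exact hn2
  have hA : (0 : K →L[ℂ] K) ≤ A := by
    have h1 : X * star X ≤ algebraMap ℝ (K →L[ℂ] K) (‖X‖ ^ 2) :=
      CStarAlgebra.mul_star_le_algebraMap_norm_sq
    have hr : (0:ℝ) ≤ 1 - ‖X‖ ^ 2 := by rw [pow_two]; linarith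
    have h2 : (0 : K →L[ℂ] K) ≤ algebraMap ℝ (K →L[ℂ] K) (1 - ‖X‖ ^ 2) := by
      set s := algebraMap ℝ (K →L[ℂ] K) (Real.sqrt (1 - ‖X‖ ^ 2)) with hs
      have h := star_mul_self_nonneg s
      have hss : star s = s := by rw [hs, ← algebraMap_star_comm, star_trivial]
      rwa [hss, ← map_mul, Real.mul_self_sqrt hr] at h
    have h3 : algebraMap ℝ (K →L[ℂ] K) (1 - ‖X‖ ^ 2) ≤ A := by
      rw [hAdef, map_sub, map_one]
      exact sub_le_sub_left h1 _
    exact h2.trans h3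
  have hUA : IsUnit A := isUnit_one_sub_of_norm_lt_one hnorm
  set D : K →L[ℂ] K := CFC.sqrt A with hDdef
  have hD2 : D * D = A := CFC.sqrt_mul_sqrt_self A hA
  have hDnn : (0 : K →L[ℂ] K) ≤ D := CFC.sqrt_nonneg A
  have hDsa : IsSelfAdjoint D := .of_nonneg hDnn
  -- D is a unit
  obtain ⟨u, hu⟩ := hUA
  have hab : D * (D * ↑u⁻¹) = 1 := by rw [← mul_assoc, hD2, ← hu, Units.mul_inv]
  have hba : (↑u⁻¹ * D) * D = 1 := by rw [mul_assoc, hD2, ← hu, Units.inv_mul]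
  have hbc : (↑u⁻¹ * D : K →L[ℂ] K) = D * ↑u⁻¹ := left_inv_eq_right_inv hba hab
  have hUD : IsUnit D := ⟨⟨D, D * ↑u⁻¹, hab, by rw [← hbc]; exact hba⟩, rfl⟩
  have hinv1 : D * Ring.inverse D = 1 := Ring.mul_inverse_cancel D hUD
  have hinv2 : Ring.inverse D * D = 1 := Ring.inverse_mul_cancel D hUD
  have hstarinv : star (Ring.inverse D) = Ring.inverse D := by
    rw [← Ring.inverse_star, hDsa.star_eq]
  -- key identity : V * A * star V = A
  have hkey : V * A * star V = A := by
    have h1 : (V * X) * star (V * X) = X * star X := by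
      have : V * X = X * (q • Vq) := by rw [hint, mul_smul_comm]
      rw [this, star_mul, ← mul_assoc, mul_assoc (X * (q • Vq))]
      calc X * (q • Vq) * (star (q • Vq) * star X)
          = X * ((q • Vq) * star (q • Vq)) * star X := by simp only [mul_assoc]
        _ = X * star X := by rw [hVq]; noncomm_ring
    calc V * A * star V = V * star V - (V * X) * star (V * X) := by
          rw [hAdef, star_mul]; noncomm_ring
      _ = 1 - X * star X := by rw [hV, h1]
      _ = A := rfl
  -- final computation
  calc Ring.inverse D * V * D * star (Ring.inverse D * V * D)
      = Ring.inverse D * (V * (D * D) * star V) * (star (Ring.inverse D)) := by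
        rw [star_mul, star_mul, hDsa.star_eq]; noncomm_ring
    _ = Ring.inverse D * A * Ring.inverse D := by rw [hD2, hkey, hstarinv]
    _ = (Ring.inverse D * D) * (D * Ring.inverse D) := by rw [← hD2]; noncomm_ring
    _ = 1 := by rw [hinv1, hinv2, one_mul]
end

section
/- Let T ∈ B(H), T' ∈ B(H'), and a contraction T2 ∈ B(H, H') with T2 T = T' T2. Suppose S ∈ B(H, H2) and S' ∈ B(H', H2') satisfy T* T + S* S = I_H and T'* T' + S'* S'= I_{H'}. Then there exist bounded operators A : H → H2' and B : H2 → H2' such that A T + B S = S' T2 and the block operator Y = [[T2, 0], [A, B]] : H ⊕ H2 → H' ⊕ H2' satisfies Y V = V' Y where V = [[T, 0], [S, 0]] and V' = [[T', 0], [S', 0]], and ‖Y‖ = ‖T2‖. -/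
open ContinuousLinearMap

set_option synthInstance.maxHeartbeats 1000000
set_option maxHeartbeats 1000000

open ContinuousLinearMap
open ContinuousLinearMap

/-- Douglas-type factorization: if `‖f x‖ ≤ ‖g x‖` pointwise, then `f = C ∘ g`
for a contraction `C`. -/
theorem douglas_factor {E F G : Type*}
    [NormedAddCommGroup E] [NormedSpace ℂ E]
    [NormedAddCommGroup F] [InnerProductSpace ℂ F] [CompleteSpace F]
    [NormedAddCommGroup G] [NormedSpace ℂ G] [CompleteSpace G]
    (g : E →L[ℂ] F) (f : E →L[ℂ] G) (hfg : ∀ x, ‖f x‖ ≤ ‖g x‖) :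
    ∃ C : F →L[ℂ] G, (∀ y, ‖C y‖ ≤ ‖y‖) ∧ C ∘L g = f := by
  classical
  -- well-definedness
  have hwd : ∀ x y : E, g x = g y → f x = f y := by
    intro x y h
    have : ‖f x - f y‖ ≤ ‖g x - g y‖ := by
      simpa [map_sub] using hfg (x - y)
    rw [h, sub_self, norm_zero] at this
    have := le_antisymm this (norm_nonneg _)
    rwa [norm_eq_zero, sub_eq_zero] at this
  set p : Submodule ℂ F := LinearMap.range (g : E →ₗ[ℂ] F) with hp
  have hmemp : ∀ x : E, g x ∈ p := fun x => LinearMap.mem_range_self _ x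
  -- the map on the range
  let sel : p → E := fun y => y.2.choose
  have hch : ∀ y : p, g (sel y) = (y : F) := fun y => y.2.choose_spec
  let φ : p →ₗ[ℂ] G :=
    { toFun := fun y => f (sel y)
      map_add' := by
        intro y z
        show f (sel (y + z)) = f (sel y) + f (sel z)
        have h1 : g (sel (y + z)) = g (sel y + sel z) := by
          rw [map_add, hch, hch, hch]; rfl
        rw [hwd _ _ h1, map_add]
      map_smul' := by
        intro c y
        show f (sel (c • y)) = c • f (sel y)
        have h1 : g (sel (c • y)) = g (c • sel y) := by
          rw [map_smul, hch, hch]; rfl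
        rw [hwd _ _ h1, map_smul] }
  have hφ : ∀ y : p, ‖φ y‖ ≤ 1 * ‖(y : F)‖ := by
    intro y
    rw [one_mul]
    calc ‖f (sel y)‖ ≤ ‖g (sel y)‖ := hfg _
    _ = ‖(y : F)‖ := by rw [hch]
  let φc : p →L[ℂ] G := LinearMap.mkContinuous φ 1 hφ
  have hφc : ∀ y : p, φc y = f (sel y) := fun y => rfl
  set M : Submodule ℂ F := p.topologicalClosure with hM
  haveI : CompleteSpace M := p.isClosed_topologicalClosure.completeSpace_coe
  -- inclusion as isometry
  let e₀ : p →ₗᵢ[ℂ] M :=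
    ⟨Submodule.inclusion (Submodule.le_topologicalClosure p), fun x => rfl⟩
  let e : p →L[ℂ] M := e₀.toContinuousLinearMap
  have h_e : IsUniformInducing e := e₀.isometry.isUniformInducing
  have h_dense : DenseRange e := by
    intro m
    have hm : (m : F) ∈ closure (p : Set F) := by
      rw [← Submodule.topologicalClosure_coe]; exact m.2
    rcases mem_closure_iff_seq_limit.mp hm with ⟨u, hup, hu⟩
    have ht : Filter.Tendsto (fun n => e ⟨u n, hup n⟩) Filter.atTop (nhds m) := by
      rw [tendsto_subtype_rng]
      exact hu
    exact mem_closure_of_tendsto ht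
      (Filter.Eventually.of_forall fun n => Set.mem_range_self _)
  let C₁ : M →L[ℂ] G := φc.extend e
  have hC₁e : ∀ y : p, C₁ (e y) = φc y := fun y => extend_eq φc h_dense h_e y
  have hC₁ : ∀ m : M, ‖C₁ m‖ ≤ ‖m‖ := by
    intro m
    refine h_dense.induction_on m ?_ ?_
    · exact isClosed_le (continuous_norm.comp C₁.continuous) continuous_norm
    · intro y
      rw [hC₁e y]
      calc ‖φc y‖ ≤ 1 * ‖(y:F)‖ := hφ y
      _ = ‖e y‖ := by rw [one_mul]; rfl
  refine ⟨C₁ ∘L (M.orthogonalProjectionOnto), ?_, ?_⟩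
  · intro y
    calc ‖C₁ (M.orthogonalProjectionOnto y)‖ ≤ ‖(M.orthogonalProjectionOnto y : F)‖ := by
          simpa using hC₁ (M.orthogonalProjectionOnto y)
    _ ≤ ‖y‖ := by
          have := (M.orthogonalProjectionOnto).le_opNorm y
          calc ‖(M.orthogonalProjectionOnto y : F)‖ = ‖M.orthogonalProjectionOnto y‖ := rfl
          _ ≤ ‖M.orthogonalProjectionOnto‖ * ‖y‖ := this
          _ ≤ 1 * ‖y‖ := by gcongr; exact Submodule.orthogonalProjectionOnto_norm_le M
          _ = ‖y‖ := one_mul _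
  · ext x
    have hgx : g x ∈ M := Submodule.le_topologicalClosure p (hmemp x)
    have hproj : M.orthogonalProjectionOnto (g x) = ⟨g x, hgx⟩ :=
      Subtype.ext (Submodule.starProjection_eq_self_iff.mpr hgx)
    have he : (⟨g x, hgx⟩ : M) = e ⟨g x, hmemp x⟩ := rfl
    simp only [comp_apply, hproj, he, hC₁e, hφc]
    exact hwd _ _ (hch ⟨g x, hmemp x⟩)

section aux

private lemma le_of_sq_le_sq' {a b : ℝ} (ha : 0 ≤ a) (hb : 0 ≤ b) (h : a ^ 2 ≤ b ^ 2) :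
    a ≤ b := by nlinarith

end aux

section blocklemmas

variable {E1 E2 F1 F2 G1 G2 : Type*}
    [NormedAddCommGroup E1] [NormedSpace ℂ E1] [NormedAddCommGroup E2] [NormedSpace ℂ E2]
    [NormedAddCommGroup F1] [NormedSpace ℂ F1] [NormedAddCommGroup F2] [NormedSpace ℂ F2]
    [NormedAddCommGroup G1] [NormedSpace ℂ G1] [NormedAddCommGroup G2] [NormedSpace ℂ G2]

lemma blockLowerTriangular_apply (f : E1 →L[ℂ] F1) (g : E1 →L[ℂ] F2) (h : E2 →L[ℂ] F2)
    (z : WithLp 2 (E1 × E2)) :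
    blockLowerTriangular f g h z =
      (WithLp.prodContinuousLinearEquiv 2 ℂ F1 F2).symm (f z.fst, g z.fst + h z.snd) := rfl

lemma blockLowerTriangular_comp (f : E1 →L[ℂ] F1) (g : E1 →L[ℂ] F2) (h : E2 →L[ℂ] F2)
    (f' : F1 →L[ℂ] G1) (g' : F1 →L[ℂ] G2) (h' : F2 →L[ℂ] G2) :
    blockLowerTriangular f' g' h' ∘L blockLowerTriangular f g h =
      blockLowerTriangular (f' ∘L f) (g' ∘L f + h' ∘L g) (h' ∘L h) := by
  ext z
  show (WithLp.prodContinuousLinearEquiv 2 ℂ G1 G2).symm _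
      = (WithLp.prodContinuousLinearEquiv 2 ℂ G1 G2).symm _
  congr 1
  refine Prod.ext rfl ?_
  show g' (f z.fst) + h' (g z.fst + h z.snd) = (g' (f z.fst) + h' (g z.fst)) + h' (h z.snd)
  rw [map_add, add_assoc]

end blocklemmas

theorem q_intertwining_isometric_lift_step {H H' H2 H2' : Type*}
    [NormedAddCommGroup H] [InnerProductSpace ℂ H] [CompleteSpace H]
    [NormedAddCommGroup H'] [InnerProductSpace ℂ H'] [CompleteSpace H']
    [NormedAddCommGroup H2] [InnerProductSpace ℂ H2] [CompleteSpace H2]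
    [NormedAddCommGroup H2'] [InnerProductSpace ℂ H2'] [CompleteSpace H2']
    (T : H →L[ℂ] H) (T' : H' →L[ℂ] H') (T2 : H →L[ℂ] H')
    (S : H →L[ℂ] H2) (S' : H' →L[ℂ] H2')
    (hT : ‖T‖ ≤ 1) (hT' : ‖T'‖ ≤ 1) (hT2 : ‖T2‖ ≤ 1)
    (hint : T2 ∘L T = T' ∘L T2)
    (hV : adjoint T ∘L T + adjoint S ∘L S = 1)
    (hV' : adjoint T' ∘L T' + adjoint S' ∘L S' = 1) :
    ∃ (A : H →L[ℂ] H2') (B : H2 →L[ℂ] H2'),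
      A ∘L T + B ∘L S = S' ∘L T2 ∧
      blockLowerTriangular T2 A B ∘L blockLowerTriangular T S (0 : H2 →L[ℂ] H2) =
        blockLowerTriangular T' S' (0 : H2' →L[ℂ] H2') ∘L blockLowerTriangular T2 A B ∧
      ‖blockLowerTriangular T2 A B‖ = ‖T2‖ := by
  classical
  set c : ℝ := ‖T2‖ with hc
  have hc0 : 0 ≤ c := norm_nonneg _
  -- pointwise versions of the hypotheses
  have hintx : ∀ x : H, T2 (T x) = T' (T2 x) := fun x => by
    simpa using ContinuousLinearMap.ext_iff.mp hint x
  have hVx : ∀ x : H, ‖T x‖ ^ 2 + ‖S x‖ ^ 2 = ‖x‖ ^ 2 := by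
    intro x
    have h := congrArg (fun L : H →L[ℂ] H => RCLike.re (inner (𝕜 := ℂ) (L x) x)) hV
    simp only [add_apply, comp_apply, ContinuousLinearMap.one_apply, inner_add_left, adjoint_inner_left, map_add] at h
    simpa only [inner_self_eq_norm_sq] using h
  have hV'x : ∀ y : H', ‖T' y‖ ^ 2 + ‖S' y‖ ^ 2 = ‖y‖ ^ 2 := by
    intro y
    have h := congrArg (fun L : H' →L[ℂ] H' => RCLike.re (inner (𝕜 := ℂ) (L y) y)) hV'
    simp only [add_apply, comp_apply, ContinuousLinearMap.one_apply, inner_add_left, adjoint_inner_left, map_add] at h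
    simpa only [inner_self_eq_norm_sq] using h
  -- the auxiliary operators
  let K := WithLp 2 (H × H2)
  let P1 : K →L[ℂ] H :=
    (fst ℂ H H2) ∘L ((WithLp.prodContinuousLinearEquiv 2 ℂ H H2) : K →L[ℂ] H × H2)
  let W : K →L[ℂ] H' := T2 ∘L P1
  let Δ : K →L[ℂ] K := ((c : ℂ) ^ 2) • 1 - adjoint W ∘L W
  have hP1f : ∀ z : K, P1 z = z.fst := fun z => rfl
  have hP1 : ∀ z : K, ‖P1 z‖ ^ 2 ≤ ‖z‖ ^ 2 := by
    intro z
    rw [WithLp.prod_norm_sq_eq_of_L2, hP1f]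
    exact le_add_of_nonneg_right (by positivity)
  have hWz : ∀ z : K, ‖W z‖ ^ 2 ≤ c ^ 2 * ‖z‖ ^ 2 := by
    intro z
    have h1 : ‖W z‖ ≤ c * ‖P1 z‖ := T2.le_opNorm (P1 z)
    have h2 := hP1 z
    have h3 : (0:ℝ) ≤ ‖P1 z‖ := norm_nonneg _
    nlinarith [norm_nonneg (W z), norm_nonneg z]
  have hΔinner : ∀ z : K, RCLike.re (inner (𝕜 := ℂ) (Δ z) z)
      = c ^ 2 * ‖z‖ ^ 2 - ‖W z‖ ^ 2 := by
    intro z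
    have h1 : inner (𝕜 := ℂ) (Δ z) z
        = (starRingEnd ℂ) ((c : ℂ) ^ 2) * inner (𝕜 := ℂ) z z
          - inner (𝕜 := ℂ) (W z) (W z) := by
      simp only [Δ, ContinuousLinearMap.sub_apply, ContinuousLinearMap.smul_apply, ContinuousLinearMap.one_apply,
        comp_apply]
      rw [inner_sub_left, inner_smul_left, adjoint_inner_left]
    rw [h1, inner_self_eq_norm_sq_to_K, inner_self_eq_norm_sq_to_K]
    simp [Complex.conj_ofReal, ← Complex.ofReal_pow, ← Complex.ofReal_mul,
      ← Complex.ofReal_sub]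
  have hΔpos : (0 : K →L[ℂ] K) ≤ Δ := by
    rw [nonneg_iff_isPositive]
    constructor
    · refine IsSelfAdjoint.isSymmetric ?_
      show star Δ = Δ
      have h1 : star ((((c : ℂ) ^ 2) • 1 : K →L[ℂ] K)) = ((c : ℂ) ^ 2) • 1 := by
        rw [star_smul, star_one]
        congr 1
        simp [Complex.star_def, ← Complex.ofReal_pow, Complex.conj_ofReal]
      simp only [Δ]
      have h2 := star_sub ((((c : ℂ) ^ 2) • 1 : K →L[ℂ] K)) (adjoint W ∘L W)
      rw [h1] at h2
      refine h2.trans ?_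
      congr 1
      simp [star_eq_adjoint, adjoint_comp, adjoint_adjoint]
    · intro z
      rw [reApplyInnerSelf_apply, hΔinner]
      have := hWz z
      linarith
  let D : K →L[ℂ] K := CFC.sqrt Δ
  have hDsa : IsSelfAdjoint D :=
    ((nonneg_iff_isPositive D).mp (CFC.sqrt_nonneg Δ)).isSelfAdjoint
  have hDD : ∀ z : K, D (D z) = Δ z := by
    intro z
    have h := CFC.sqrt_mul_sqrt_self Δ hΔpos
    calc D (D z) = (D * D) z := rfl
    _ = Δ z := by rw [h]
  have hDnorm : ∀ z : K, ‖D z‖ ^ 2 = c ^ 2 * ‖z‖ ^ 2 - ‖W z‖ ^ 2 := by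
    intro z
    rw [← hΔinner z, ← hDD z]
    rw [← inner_self_eq_norm_sq (𝕜 := ℂ) (D z)]
    congr 1
    have h2 := adjoint_inner_left D z (D z)
    rw [hDsa.adjoint_eq] at h2
    exact h2.symm
  -- the intertwining data
  let Vc : H →L[ℂ] K :=
    ((WithLp.prodContinuousLinearEquiv 2 ℂ H H2).symm : (H × H2) →L[ℂ] K) ∘L (T.prod S)
  let g : H →L[ℂ] K := D ∘L Vc
  let f : H →L[ℂ] H2' := S' ∘L T2
  have hVcn : ∀ x : H, ‖Vc x‖ ^ 2 = ‖x‖ ^ 2 := by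
    intro x
    rw [WithLp.prod_norm_sq_eq_of_L2]
    exact hVx x
  have hWVc : ∀ x : H, W (Vc x) = T2 (T x) := fun x => rfl
  have hbound : ∀ x : H, ‖f x‖ ≤ ‖g x‖ := by
    intro x
    have hg : ‖g x‖ ^ 2 = c ^ 2 * ‖x‖ ^ 2 - ‖T2 (T x)‖ ^ 2 := by
      show ‖D (Vc x)‖ ^ 2 = _
      rw [hDnorm, hVcn, hWVc]
    have hf : ‖f x‖ ^ 2 = ‖T2 x‖ ^ 2 - ‖T2 (T x)‖ ^ 2 := by
      show ‖S' (T2 x)‖ ^ 2 = _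
      have := hV'x (T2 x)
      rw [← hintx x] at this
      linarith
    have hT2x : ‖T2 x‖ ≤ c * ‖x‖ := T2.le_opNorm x
    refine le_of_sq_le_sq' (norm_nonneg _) (norm_nonneg _) ?_
    rw [hg, hf]
    nlinarith [norm_nonneg (T2 x), norm_nonneg x]
  obtain ⟨C, hCle, hCg⟩ := douglas_factor g f hbound
  let R : K →L[ℂ] H2' := C ∘L D
  let J1 : H →L[ℂ] K :=
    ((WithLp.prodContinuousLinearEquiv 2 ℂ H H2).symm : (H × H2) →L[ℂ] K) ∘L inl ℂ H H2
  let J2 : H2 →L[ℂ] K :=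
    ((WithLp.prodContinuousLinearEquiv 2 ℂ H H2).symm : (H × H2) →L[ℂ] K) ∘L inr ℂ H H2
  let A : H →L[ℂ] H2' := R ∘L J1
  let B : H2 →L[ℂ] H2' := R ∘L J2
  have hJ : ∀ (a : H) (b : H2), J1 a + J2 b
      = ((WithLp.prodContinuousLinearEquiv 2 ℂ H H2).symm (a, b) : K) := by
    intro a b
    show ((WithLp.prodContinuousLinearEquiv 2 ℂ H H2).symm (a, 0) : K)
        + ((WithLp.prodContinuousLinearEquiv 2 ℂ H H2).symm (0, b) : K) = _
    rw [← map_add]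
    congr 1
    simp [Prod.mk_add_mk]
  have hAB : ∀ z : K, A z.fst + B z.snd = R z := by
    intro z
    show R (J1 z.fst) + R (J2 z.snd) = R z
    rw [← map_add, hJ]
    rfl
  have hABeq : ∀ x : H, A (T x) + B (S x) = S' (T2 x) := by
    intro x
    show R (J1 (T x)) + R (J2 (S x)) = S' (T2 x)
    rw [← map_add, hJ]
    have : ((WithLp.prodContinuousLinearEquiv 2 ℂ H H2).symm (T x, S x) : K) = Vc x := rfl
    rw [this]
    show C (D (Vc x)) = S' (T2 x)
    exact ContinuousLinearMap.ext_iff.mp hCg x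
  have heq1 : A ∘L T + B ∘L S = S' ∘L T2 := by
    ext x
    simpa using hABeq x
  refine ⟨A, B, heq1, ?_, ?_⟩
  · rw [blockLowerTriangular_comp, blockLowerTriangular_comp, hint, heq1]
    rw [comp_zero, zero_comp, add_zero, zero_comp]
  · -- the norm identity
    have hYap : ∀ z : K, blockLowerTriangular T2 A B z
        = (WithLp.prodContinuousLinearEquiv 2 ℂ H' H2').symm (T2 z.fst, R z) := by
      intro z
      rw [blockLowerTriangular_apply, hAB z]
    have hle : ‖blockLowerTriangular T2 A B‖ ≤ c := by
      refine opNorm_le_bound _ hc0 fun z => ?_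
      have hsq : ‖blockLowerTriangular T2 A B z‖ ^ 2 = ‖T2 z.fst‖ ^ 2 + ‖R z‖ ^ 2 := by
        rw [hYap, WithLp.prod_norm_sq_eq_of_L2]
        rfl
      have hR : ‖R z‖ ≤ ‖D z‖ := hCle (D z)
      have hDz := hDnorm z
      have hWzf : W z = T2 z.fst := rfl
      refine le_of_sq_le_sq' (norm_nonneg _) (by positivity) ?_
      rw [hsq, mul_pow]
      rw [hWzf] at hDz
      nlinarith [norm_nonneg (R z), norm_nonneg (D z)]
    have hge : c ≤ ‖blockLowerTriangular T2 A B‖ := by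
      rw [hc]
      refine opNorm_le_bound _ (norm_nonneg (blockLowerTriangular T2 A B)) fun x => ?_
      have h1 : ‖J1 x‖ = ‖x‖ := by
        refine le_antisymm ?_ ?_ <;>
          refine le_of_sq_le_sq' (norm_nonneg _) (norm_nonneg _) ?_ <;>
            rw [show (‖J1 x‖ : ℝ) ^ 2 = ‖x‖ ^ 2 + ‖(0 : H2)‖ ^ 2 from
              WithLp.prod_norm_sq_eq_of_L2 _] <;> simp
      have h2 : ‖T2 x‖ ≤ ‖blockLowerTriangular T2 A B (J1 x)‖ := by
        refine le_of_sq_le_sq' (norm_nonneg _) (norm_nonneg _) ?_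
        rw [hYap, WithLp.prod_norm_sq_eq_of_L2]
        show ‖T2 x‖ ^ 2 ≤ ‖T2 ((J1 x).fst)‖ ^ 2 + ‖R (J1 x)‖ ^ 2
        have : (J1 x).fst = x := rfl
        rw [this]
        exact le_add_of_nonneg_right (by positivity)
      calc ‖T2 x‖ ≤ ‖blockLowerTriangular T2 A B (J1 x)‖ := h2
      _ ≤ ‖blockLowerTriangular T2 A B‖ * ‖J1 x‖ := le_opNorm _ _
      _ = ‖blockLowerTriangular T2 A B‖ * ‖x‖ := by rw [h1]
    exact le_antisymm hle hge
end
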